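/- arXiv:2602.12270 — 7 statements merged into one kernel-verified Lean document; each statement's English description precedes it below -/
import Mathlib

section
/- Let g be a generator on subsets of X. Define the Radon number R(g) as the smallest integer k such that every corpus C with |C| ≥ k contains two disjoint nonempty subsets A, B ⊆ C with g(A) ∩ g(B) ≠ ∅. If a finite corpus C satisfies: there exist disjoint subsets A, B ⊆ C with g(A) ∩ g(B) ≠ ∅, then the permissible set p_g(C) = ⋂_{c ∈ C} g(C \ {c}) is nonempty. -/
theorem permissible_nonempty_of_radon {X : Type*} (g : Set X → Set X)
    (hpres : ∀ C, C ⊆ g C)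
    (hmono : ∀ C D, C ⊆ D → g C ⊆ g D)
    (hidem : ∀ C, g (g C) = g C)
    (C : Set X) (hfin : C.Finite)
    (h : ∃ A B : Set X, A ⊆ C ∧ B ⊆ C ∧ Disjoint A B ∧ (g A ∩ g B).Nonempty) :
    (⋂ c ∈ C, g (C \ {c})).Nonempty := by
  obtain ⟨A, B, hA, hB, hdisj, x, hxA, hxB⟩ := h
  refine ⟨x, ?_⟩
  simp only [Set.mem_iInter]
  intro c _
  by_cases hc : c ∈ A
  · have : B ⊆ C \ {c} := fun b hb => ⟨hB hb, fun hbc => hdisj.ne_of_mem hc hb hbc.symm⟩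
    exact hmono _ _ this hxB
  · have : A ⊆ C \ {c} := fun a ha => ⟨hA ha, fun hac => hc (hac ▸ ha)⟩
    exact hmono _ _ this hxA
end

section
/- Let g be a generator on subsets of X and C a corpus. If c ∈ g(C) but c ∉ p_g(C) (i.e., c is a violation), and c ∉ C, then p_g(C) is a strict subset of p_g(C ∪ {c}); in particular c ∈ p_g(C ∪ {c}) but c ∉ p_g(C). -/
theorem permissible_add_violation {X : Type*} (g : Set X → Set X)
    (hpres : ∀ C, C ⊆ g C)
    (hmono : ∀ C D, C ⊆ D → g C ⊆ g D)
    (hidem : ∀ C, g (g C) = g C)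
    (C : Set X) (c : X) (hcC : c ∉ C)
    (hgen : c ∈ g C)
    (hviol : c ∉ ⋂ c' ∈ C, g (C \ {c'})) :
    (⋂ c' ∈ C, g (C \ {c'})) ⊂ (⋂ c' ∈ C ∪ {c}, g ((C ∪ {c}) \ {c'})) ∧
      c ∈ ⋂ c' ∈ C ∪ {c}, g ((C ∪ {c}) \ {c'}) := by
  have hCne : C.Nonempty := by
    by_contra h
    push_neg at h
    apply hviol
    simp [h]
  obtain ⟨c0, hc0⟩ := hCne
  have hmem : c ∈ ⋂ c' ∈ C ∪ {c}, g ((C ∪ {c}) \ {c'}) := by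
    refine Set.mem_iInter₂.mpr fun c' hc' => ?_
    rcases hc' with hc' | hc'
    · have hne : c ≠ c' := fun h => hcC (h ▸ hc')
      exact hpres _ ⟨Or.inr rfl, hne⟩
    · simp only [Set.mem_singleton_iff] at hc'
      subst hc'
      have : (C ∪ {c'}) \ {c'} = C := by
        ext x; simp only [Set.mem_diff, Set.mem_union, Set.mem_singleton_iff]
        constructor
        · rintro ⟨h1 | h1, h2⟩
          · exact h1
          · exact absurd h1 h2
        · intro h; exact ⟨Or.inl h, fun h2 => hcC (h2 ▸ h)⟩
      rw [this]; exact hgen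
  have hsub : (⋂ c' ∈ C, g (C \ {c'})) ⊆ (⋂ c' ∈ C ∪ {c}, g ((C ∪ {c}) \ {c'})) := by
    intro x hx
    refine Set.mem_iInter₂.mpr fun c' hc' => ?_
    have hx' := Set.mem_iInter₂.mp hx
    rcases hc' with hc' | hc'
    · exact hmono _ _ (Set.diff_subset_diff_left Set.subset_union_left) (hx' c' hc')
    · simp only [Set.mem_singleton_iff] at hc'
      subst hc'
      have : x ∈ g C := hmono _ _ Set.diff_subset (hx' c0 hc0)
      exact hmono _ _ (Set.subset_diff.mpr ⟨Set.subset_union_left,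
        Set.disjoint_singleton_right.mpr hcC⟩) this
  exact ⟨⟨hsub, fun h => hviol (h hmem)⟩, hmem⟩
end

section
/- Let g be a convex-valued generator on subsets of ℝ^d. If C ⊆ ℝ^d is a finite set with |C| ≥ d + 2, then the permissible set p_g(C) = ⋂_{c ∈ C} g(C \ {c}) is nonempty. -/
theorem permissible_nonempty_convexValued (d : ℕ) (g : Set (Fin d → ℝ) → Set (Fin d → ℝ))
    (hpres : ∀ C, C ⊆ g C)
    (hmono : ∀ C D, C ⊆ D → g C ⊆ g D)
    (hidem : ∀ C, g (g C) = g C)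
    (hconv : ∀ C, Convex ℝ (g C))
    (C : Finset (Fin d → ℝ)) (hcard : d + 2 ≤ C.card) :
    (⋂ c ∈ (C : Set (Fin d → ℝ)), g ((C : Set (Fin d → ℝ)) \ {c})).Nonempty := by
  -- choose a subset D of C with card d+2
  obtain ⟨D, hDC, hDcard⟩ := Finset.exists_subset_card_eq hcard
  -- the inclusion map is not affinely independent
  have hdep : ¬ AffineIndependent ℝ (fun x : ↥(D : Set (Fin d → ℝ)) => (x : Fin d → ℝ)) := by
    intro h
    have := h.card_le_finrank_succ
    have hc2 : Fintype.card ↥(D : Set (Fin d → ℝ)) = d + 2 := by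
      simp [hDcard]
    have hfr : Module.finrank ℝ (Fin d → ℝ) = d := by simp
    have hle : Module.finrank ℝ ↥(vectorSpan ℝ (Set.range (fun x : ↥(D : Set (Fin d → ℝ)) => (x : Fin d → ℝ)))) ≤ d := by
      calc Module.finrank ℝ ↥(vectorSpan ℝ (Set.range (fun x : ↥(D : Set (Fin d → ℝ)) => (x : Fin d → ℝ)))) ≤ Module.finrank ℝ (Fin d → ℝ) := Submodule.finrank_le _
        _ = d := hfr
    omega
  obtain ⟨I, x, hxI, hxIc⟩ := Convex.radon_partition hdep
  refine ⟨x, ?_⟩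
  simp only [Set.mem_iInter]
  intro c hc
  -- c is missing from at least one side
  have key : ∀ (S : Set (D : Set (Fin d → ℝ))),
      c ∉ Subtype.val '' S → x ∈ convexHull ℝ (Subtype.val '' S) →
      x ∈ g ((C : Set (Fin d → ℝ)) \ {c}) := by
    intro S hcS hxS
    have hsub : Subtype.val '' S ⊆ (C : Set (Fin d → ℝ)) \ {c} := by
      rintro y ⟨⟨y, hyD⟩, hyS, rfl⟩
      exact ⟨hDC hyD, fun hy => hcS ⟨⟨y, hyD⟩, hyS, hy ▸ rfl⟩⟩
    exact convexHull_min (hsub.trans (hpres _)) (hconv _) hxS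
  by_cases hcI : c ∈ Subtype.val '' I
  · refine key Iᶜ (fun hcIc => ?_) hxIc
    obtain ⟨a, haI, ha⟩ := hcI
    obtain ⟨b, hbI, hb⟩ := hcIc
    have : a = b := Subtype.ext (ha.trans hb.symm)
    exact hbI (this ▸ haI)
  · exact key I hcI hxI
end

section
/- Radon's theorem implies nonemptiness of the permissible set for the convex hull generator: if C ⊆ ℝ^d is finite with |C| ≥ d + 2, then ⋂_{c ∈ C} conv(C \ {c}) ≠ ∅. -/
theorem permissible_nonempty_convexHull (d : ℕ)
    (C : Finset (Fin d → ℝ)) (hcard : d + 2 ≤ C.card) :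
    (⋂ c ∈ (C : Set (Fin d → ℝ)), convexHull ℝ ((C : Set (Fin d → ℝ)) \ {c})).Nonempty := by
  classical
  have hdep : ¬ AffineIndependent ℝ (fun x : ↥(C : Set (Fin d → ℝ)) => (x : Fin d → ℝ)) := by
    intro h
    have hc := h.card_le_finrank_succ
    have h2 := (vectorSpan ℝ (Set.range fun x : ↥(C : Set (Fin d → ℝ)) => (x : Fin d → ℝ))).finrank_le
    have h3 : Fintype.card ↥(C : Set (Fin d → ℝ)) = C.card := by simp
    rw [h3] at hc
    simp only [Module.finrank_fintype_fun_eq_card, Fintype.card_fin] at h2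
    omega
  obtain ⟨I, p, hpI, hpIc⟩ := Convex.radon_partition hdep
  refine ⟨p, ?_⟩
  simp only [Set.mem_iInter]
  intro c hc
  by_cases hcI : (⟨c, hc⟩ : (C : Set (Fin d → ℝ))) ∈ I
  · refine convexHull_mono ?_ hpIc
    rintro x ⟨⟨y, hy⟩, hyI, rfl⟩
    refine ⟨hy, ?_⟩
    intro hxc
    apply hyI
    simp only [Set.mem_singleton_iff] at hxc
    subst hxc
    exact hcI
  · refine convexHull_mono ?_ hpI
    rintro x ⟨⟨y, hy⟩, hyI, rfl⟩
    refine ⟨hy, ?_⟩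
    intro hxc
    simp only [Set.mem_singleton_iff] at hxc
    subst hxc
    exact hcI hyI
end

section
/- Let g be a generator on subsets of X and 𝒜 a family of subsets of X. The groupwise permissible set P = ⋂_{A ∈ 𝒜} g(C \ A) is stable: g(P) = P, assuming 𝒜 is nonempty. -/
theorem groupwise_permissible_stable {X : Type*} (g : Set X → Set X)
    (hpres : ∀ C, C ⊆ g C)
    (hmono : ∀ C D, C ⊆ D → g C ⊆ g D)
    (hidem : ∀ C, g (g C) = g C)
    (𝒜 : Set (Set X)) (h𝒜 : 𝒜.Nonempty) (C : Set X) :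
    g (⋂ A ∈ 𝒜, g (C \ A)) = ⋂ A ∈ 𝒜, g (C \ A) := by
  apply Set.Subset.antisymm
  · intro x hx
    refine Set.mem_iInter₂.2 fun A hA => ?_
    have h1 : (⋂ A ∈ 𝒜, g (C \ A)) ⊆ g (C \ A) := Set.biInter_subset_of_mem hA
    have := hmono _ _ h1 hx
    rwa [hidem] at this
  · exact hpres _
end

section
/- Let (Z_i)_{i≥1} be a sequence of positive real random variables such that: (1) for every ε > 0, almost surely there exists N with Z_n ≤ (1+ε) max_{i ≤ n-1} Z_i for all n ≥ N; and (2) max_{i ≤ n} Z_i → ∞ almost surely. Then for every ε > 0, almost surely there exists Ñ such that for all n ≥ Ñ and all j ∈ {1,…,n}: max_{i ≤ n} Z_i ≤ (1+ε) max_{i ∈ {1,…,n} \ {j}} Z_i. -/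
open MeasureTheory Filter

lemma iSup_finset_eq_sup' (f : ℕ → ℝ) (s : Finset ℕ) (hs : s.Nonempty) :
    (⨆ i : s, f i) = s.sup' hs f := by
  rw [Finset.sup'_eq_csSup_image, iSup]
  congr 1
  ext x
  simp [Subtype.exists, eq_comm]

theorem no_single_essential_observation
    {Ω : Type*} [MeasurableSpace Ω] (μ : Measure Ω) [IsProbabilityMeasure μ]
    (Z : ℕ → Ω → ℝ)
    (hpos : ∀ i ω, 0 < Z i ω)
    (h1 : ∀ ε > (0 : ℝ), ∀ᵐ ω ∂μ, ∃ N, 2 ≤ N ∧ ∀ n ≥ N,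
        Z n ω ≤ (1 + ε) * ⨆ i : Finset.Icc 1 (n - 1), Z i ω)
    (h2 : ∀ᵐ ω ∂μ,
        Tendsto (fun n => ⨆ i : Finset.Icc 1 n, Z i ω) atTop atTop) :
    ∀ ε > (0 : ℝ), ∀ᵐ ω ∂μ, ∃ N, ∀ n ≥ N, ∀ j ∈ Finset.Icc 1 n,
        (⨆ i : Finset.Icc 1 n, Z i ω) ≤
          (1 + ε) * ⨆ i : (Finset.Icc 1 n).erase j, Z i ω := by
  intro ε hε
  filter_upwards [h1 ε hε, h2] with ω hω1 hω2
  obtain ⟨N₀, hN₀2, hN₀⟩ := hω1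
  set f : ℕ → ℝ := fun i => Z i ω with hf
  have hCne : (Finset.Icc 1 N₀).Nonempty := ⟨1, by simp; omega⟩
  set C : ℝ := (Finset.Icc 1 N₀).sup' hCne f with hC
  obtain ⟨N₁, hN₁⟩ := (eventually_atTop.mp (hω2.eventually (eventually_gt_atTop C)))
  refine ⟨max N₀ N₁, fun n hn j hj => ?_⟩
  have hnN₀ : N₀ ≤ n := le_trans (le_max_left _ _) hn
  have hnN₁ : N₁ ≤ n := le_trans (le_max_right _ _) hn
  have hj' := Finset.mem_Icc.mp hj
  have hsn : (Finset.Icc 1 n).Nonempty := ⟨1, by simp; omega⟩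
  have hq : ((Finset.Icc 1 n).erase j).Nonempty := by
    rcases eq_or_ne j 1 with h | h
    · exact ⟨2, by simp [Finset.mem_erase, h]; omega⟩
    · exact ⟨1, by simp [Finset.mem_erase, h]; omega⟩
  have hMn : C < ⨆ i : Finset.Icc 1 n, f i := hN₁ n hnN₁
  rw [iSup_finset_eq_sup' f _ hsn] at hMn ⊢
  rw [iSup_finset_eq_sup' f _ hq]
  obtain ⟨k, hk, hkeq⟩ := Finset.exists_mem_eq_sup' hsn f
  by_cases hkj : k = j
  · -- j is an argmax
    subst hkj
    by_cases hjN : N₀ ≤ k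
    · -- use h1 at k
      have h2k : 2 ≤ k := le_trans hN₀2 hjN
      have hne' : (Finset.Icc 1 (k - 1)).Nonempty := ⟨1, by simp; omega⟩
      have hZk := hN₀ k hjN
      rw [iSup_finset_eq_sup' f _ hne'] at hZk
      have hsub : Finset.Icc 1 (k - 1) ⊆ (Finset.Icc 1 n).erase k := by
        intro i hi
        simp only [Finset.mem_Icc] at hi
        simp only [Finset.mem_erase, Finset.mem_Icc]
        omega
      have hmono : (Finset.Icc 1 (k - 1)).sup' hne' f ≤
          ((Finset.Icc 1 n).erase k).sup' hq f := Finset.sup'_mono f hsub hne'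
      calc (Finset.Icc 1 n).sup' hsn f = f k := hkeq
        _ ≤ (1 + ε) * (Finset.Icc 1 (k - 1)).sup' hne' f := hZk
        _ ≤ (1 + ε) * ((Finset.Icc 1 n).erase k).sup' hq f := by nlinarith
    · -- k < N₀ : contradiction
      exfalso
      have hkC : f k ≤ C := Finset.le_sup' f (by simp [Finset.mem_Icc]; omega)
      rw [← hkeq] at hkC
      linarith
  · -- argmax survives erasing j
    have hmem : k ∈ (Finset.Icc 1 n).erase j := Finset.mem_erase.mpr ⟨hkj, hk⟩
    have h1' : f k ≤ ((Finset.Icc 1 n).erase j).sup' hq f := Finset.le_sup' f hmem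
    have hpos' : (0:ℝ) < ((Finset.Icc 1 n).erase j).sup' hq f :=
      lt_of_lt_of_le (hpos k ω) h1'
    rw [hkeq]
    nlinarith
end

section
/- Deterministic version of Lemma on maxima: let (z_i)_{i≥1} be a sequence of positive reals such that (1) there exists N with z_n ≤ (1+ε) max_{i ≤ n-1} z_i for all n ≥ N, and (2) max_{i ≤ n} z_i → ∞ as n → ∞. Then there exists Ñ such that for all n ≥ Ñ and all j ≤ n: max_{i ≤ n} z_i ≤ (1+ε) max_{i ∈ {1,…,n}, i ≠ j} z_i. -/
open Filter

lemma ciSup_subtype_eq_sup' (z : ℕ → ℝ) (s : Finset ℕ) (hs : s.Nonempty) :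
    (⨆ i : s, z i) = s.sup' hs z := by
  rw [Finset.sup'_eq_csSup_image, iSup]
  congr 1
  rw [show (fun i : s => z i) = z ∘ (fun i : s => (i : ℕ)) from rfl,
    Set.range_comp]
  ext x
  simp

theorem no_single_essential_term_det
    (z : ℕ → ℝ) (hpos : ∀ i, 0 < z i) (ε : ℝ) (hε : 0 < ε)
    (h1 : ∃ N, 2 ≤ N ∧ ∀ n ≥ N,
        z n ≤ (1 + ε) * ⨆ i : Finset.Icc 1 (n - 1), z i)
    (h2 : Tendsto (fun n => ⨆ i : Finset.Icc 1 n, z i) atTop atTop) :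
    ∃ N, ∀ n ≥ N, ∀ j ∈ Finset.Icc 1 n,
        (⨆ i : Finset.Icc 1 n, z i) ≤
          (1 + ε) * ⨆ i : (Finset.Icc 1 n).erase j, z i := by
  obtain ⟨N, hN2, hN⟩ := h1
  have hNne : (Finset.Icc 1 N).Nonempty := ⟨1, by simp; omega⟩
  set C : ℝ := (Finset.Icc 1 N).sup' hNne z with hC
  obtain ⟨M, hM⟩ := eventually_atTop.mp (tendsto_atTop.mp h2 (C + 1))
  refine ⟨max M N, fun n hn j hj => ?_⟩
  have hnM : n ≥ M := le_trans (le_max_left _ _) hn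
  have hnN : n ≥ N := le_trans (le_max_right _ _) hn
  have hnne : (Finset.Icc 1 n).Nonempty := ⟨1, by simp; omega⟩
  rw [ciSup_subtype_eq_sup' z _ hnne]
  -- the max over Icc 1 n
  obtain ⟨i₀, hi₀m, hi₀⟩ := Finset.exists_mem_eq_sup' hnne z
  have hMn : C + 1 ≤ (Finset.Icc 1 n).sup' hnne z := by
    have := hM n hnM
    rwa [ciSup_subtype_eq_sup' z _ hnne] at this
  by_cases hij : i₀ = j
  · -- max attained at j
    subst hij
    -- then z i₀ > C, so i₀ ≥ N impossible? no: i₀ could be ≥ N; if i₀ < N then z i₀ ≤ C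
    have hi₀N : N ≤ i₀ := by
      by_contra h
      push_neg at h
      have : z i₀ ≤ C := Finset.le_sup' z (by
        simp only [Finset.mem_Icc] at hi₀m ⊢; omega)
      rw [hi₀] at hMn
      linarith
    have hz := hN i₀ hi₀N
    have hsub : Finset.Icc 1 (i₀ - 1) ⊆ (Finset.Icc 1 n).erase i₀ := by
      intro x hx
      simp only [Finset.mem_Icc, Finset.mem_erase] at hx ⊢
      simp only [Finset.mem_Icc] at hi₀m
      omega
    have hne1 : (Finset.Icc 1 (i₀ - 1)).Nonempty := ⟨1, by simp; omega⟩
    have hne2 : ((Finset.Icc 1 n).erase i₀).Nonempty := hne1.mono hsub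
    rw [ciSup_subtype_eq_sup' z _ hne1] at hz
    rw [ciSup_subtype_eq_sup' z _ hne2]
    rw [hi₀]
    calc z i₀ ≤ (1 + ε) * (Finset.Icc 1 (i₀ - 1)).sup' hne1 z := hz
      _ ≤ (1 + ε) * ((Finset.Icc 1 n).erase i₀).sup' hne2 z := by
          apply mul_le_mul_of_nonneg_left (Finset.sup'_mono z hsub hne1) (by linarith)
  · -- max attained at i₀ ≠ j
    have hi₀e : i₀ ∈ (Finset.Icc 1 n).erase j := Finset.mem_erase.mpr ⟨hij, hi₀m⟩
    have hne2 : ((Finset.Icc 1 n).erase j).Nonempty := ⟨i₀, hi₀e⟩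
    rw [ciSup_subtype_eq_sup' z _ hne2]
    have h1 : (Finset.Icc 1 n).sup' hnne z ≤ ((Finset.Icc 1 n).erase j).sup' hne2 z := by
      rw [hi₀]; exact Finset.le_sup' z hi₀e
    have h2 : 0 < ((Finset.Icc 1 n).erase j).sup' hne2 z :=
      lt_of_lt_of_le (hpos i₀) (Finset.le_sup' z hi₀e)
    nlinarith
end
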